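/- Let f be a broadcast on a graph G, and let u₁ ≠ u₂ be broadcast vertices with u₁' ∈ PB_f(u₁) and u₂' ∈ PB_f(u₂). If P₁ is a u₁–u₁' geodesic and P₂ is a u₂–u₂' geodesic, then P₁ and P₂ are vertex-disjoint. -/

import Mathlib

namespace AJC

variable {V : Type*}

/-- Eccentricity of a vertex: max distance to any vertex. -/
noncomputable def ecc [Fintype V] (G : SimpleGraph V) (v : V) : ℕ :=
  Finset.univ.sup (fun u => G.dist v u)

/-- Diameter: max eccentricity. -/
noncomputable def diam [Fintype V] (G : SimpleGraph V) : ℕ :=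
  Finset.univ.sup (fun v => ecc G v)

/-- Radius: minimum eccentricity. -/
noncomputable def rad [Fintype V] (G : SimpleGraph V) : ℕ :=
  sInf (Set.range (ecc G))

/-- A broadcast on `G`. -/
def IsBroadcast [Fintype V] (G : SimpleGraph V) (f : V → ℕ) : Prop :=
  ∀ v, f v ≤ ecc G v

/-- `u` hears the broadcast `f` (is dominated by `f`). -/
def Hears (G : SimpleGraph V) (f : V → ℕ) (u : V) : Prop :=
  ∃ v, 1 ≤ f v ∧ G.dist v u ≤ f v

/-- A dominating broadcast. -/
def IsDomBroadcast [Fintype V] (G : SimpleGraph V) (f : V → ℕ) : Prop :=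
  IsBroadcast G f ∧ ∀ u, Hears G f u

/-- A minimal dominating broadcast: no strictly smaller broadcast is dominating. -/
def IsMinDomBroadcast [Fintype V] (G : SimpleGraph V) (f : V → ℕ) : Prop :=
  IsDomBroadcast G f ∧ ∀ f' : V → ℕ, f' < f → ¬ IsDomBroadcast G f'

/-- The cost of a broadcast. -/
def cost [Fintype V] (f : V → ℕ) : ℕ := ∑ v, f v

/-- The upper broadcast domination number `Γ_b`. -/
noncomputable def upperBroadcastNum [Fintype V] (G : SimpleGraph V) : ℕ :=
  sSup {n | ∃ f : V → ℕ, IsMinDomBroadcast G f ∧ cost f = n}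

/-- The broadcast domination number `γ_b`. -/
noncomputable def broadcastNum [Fintype V] (G : SimpleGraph V) : ℕ :=
  sInf {n | ∃ f : V → ℕ, IsDomBroadcast G f ∧ cost f = n}

/-- The `f`-neighbourhood of `v`. -/
def Nf (G : SimpleGraph V) (f : V → ℕ) (v : V) : Set V := {u | G.dist v u ≤ f v}

/-- The `f`-boundary of `v`. -/
def Bf (G : SimpleGraph V) (f : V → ℕ) (v : V) : Set V := {u | G.dist v u = f v}

/-- The `f`-private neighbourhood of `v`. -/
def PN (G : SimpleGraph V) (f : V → ℕ) (v : V) : Set V :=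
  {u | G.dist v u ≤ f v ∧ ∀ w, w ≠ v → 1 ≤ f w → ¬ G.dist w u ≤ f w}

/-- The `f`-private boundary of `v`: vertices in `N_f[v]` not dominated once the
broadcast at `v` is decreased by one. -/
def PB [DecidableEq V] (G : SimpleGraph V) (f : V → ℕ) (v : V) : Set V :=
  {u | G.dist v u ≤ f v ∧ ¬ Hears G (Function.update f v (f v - 1)) u}

/-- A dominating set of vertices. -/
def IsDomSet (G : SimpleGraph V) (S : Finset V) : Prop :=
  ∀ v, v ∈ S ∨ ∃ u ∈ S, G.Adj u v

/-- A minimal dominating set. -/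
def IsMinDomSet (G : SimpleGraph V) (S : Finset V) : Prop :=
  IsDomSet G S ∧ ∀ T ⊂ S, ¬ IsDomSet G T

/-- An independent set of vertices. -/
def IsIndepSet (G : SimpleGraph V) (S : Finset V) : Prop :=
  ∀ u ∈ S, ∀ w ∈ S, u ≠ w → ¬ G.Adj u w

/-- The upper domination number `Γ`. -/
noncomputable def upperDomNum [Fintype V] (G : SimpleGraph V) : ℕ :=
  sSup {n | ∃ S : Finset V, IsMinDomSet G S ∧ S.card = n}

/-- The domination number `γ`. -/
noncomputable def domNum [Fintype V] (G : SimpleGraph V) : ℕ :=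
  sInf {n | ∃ S : Finset V, IsDomSet G S ∧ S.card = n}

/-- The independence number `α`. -/
noncomputable def indepNum [Fintype V] (G : SimpleGraph V) : ℕ :=
  sSup {n | ∃ S : Finset V, IsIndepSet G S ∧ S.card = n}

/-- Given a diametrical path `v 0, …, v d` of a tree, `sideTree G d v i` is the set of
vertices connected to `v i` by a path internally disjoint from the diametrical path. -/
def sideTree (G : SimpleGraph V) (d : ℕ) (v : ℕ → V) (i : ℕ) : Set V :=
  {x | ∃ p : G.Walk x (v i), p.IsPath ∧ ∀ y ∈ p.support, y ≠ v i → ∀ j ≤ d, v j ≠ y}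

/-- The diameter of the subtree `T_i`. -/
noncomputable def sideDiam (G : SimpleGraph V) (d : ℕ) (v : ℕ → V) (i : ℕ) : ℕ :=
  sSup {n | ∃ x ∈ sideTree G d v i, ∃ y ∈ sideTree G d v i, G.dist x y = n}

/-- The eccentricity of a vertex `x` within the subtree `T_i`. -/
noncomputable def sideEcc (G : SimpleGraph V) (d : ℕ) (v : ℕ → V) (i : ℕ) (x : V) : ℕ :=
  sSup {n | ∃ y ∈ sideTree G d v i, G.dist x y = n}

/-- A leaf of `G`. -/
def IsLeaf [Fintype V] (G : SimpleGraph V) [DecidableRel G.Adj] (x : V) : Prop :=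
  G.degree x = 1

/-- A stem: a vertex adjacent to a leaf. -/
def IsStem [Fintype V] (G : SimpleGraph V) [DecidableRel G.Adj] (x : V) : Prop :=
  ∃ l, IsLeaf G l ∧ G.Adj x l

/-- A strong stem: a vertex adjacent to at least two leaves. -/
def IsStrongStem [Fintype V] (G : SimpleGraph V) [DecidableRel G.Adj] (x : V) : Prop :=
  ∃ l₁ l₂, l₁ ≠ l₂ ∧ IsLeaf G l₁ ∧ IsLeaf G l₂ ∧ G.Adj x l₁ ∧ G.Adj x l₂


/-- Geodesics from distinct broadcast vertices to their private boundary
vertices are vertex-disjoint. -/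
theorem stmt2 {V : Type*} [Fintype V] [DecidableEq V] (G : SimpleGraph V)
    (hconn : G.Connected) (f : V → ℕ) (hf : IsBroadcast G f)
    (u₁ u₂ u₁' u₂' : V) (hne : u₁ ≠ u₂) (h₁ : 0 < f u₁) (h₂ : 0 < f u₂)
    (hb₁ : u₁' ∈ PB G f u₁) (hb₂ : u₂' ∈ PB G f u₂)
    (p₁ : G.Walk u₁ u₁') (p₂ : G.Walk u₂ u₂')
    (hp₁ : p₁.IsPath) (hlen₁ : p₁.length = G.dist u₁ u₁')
    (hp₂ : p₂.IsPath) (hlen₂ : p₂.length = G.dist u₂ u₂') :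
    ∀ x, x ∈ p₁.support → x ∉ p₂.support := by
  intro x hx1 hx2
  obtain ⟨hd1, hh1⟩ := hb₁
  obtain ⟨hd2, hh2⟩ := hb₂
  have key1 : f u₂ < G.dist u₂ u₁' := by
    by_contra h
    push_neg at h
    exact hh1 ⟨u₂, by simpa [Function.update_of_ne (Ne.symm hne), Nat.one_le_iff_ne_zero, Nat.pos_iff_ne_zero] using h₂,
      by simpa [Function.update_of_ne (Ne.symm hne)] using h⟩
  have key2 : f u₁ < G.dist u₁ u₂' := by
    by_contra h
    push_neg at h
    exact hh2 ⟨u₁, by simpa [Function.update_of_ne hne, Nat.one_le_iff_ne_zero, Nat.pos_iff_ne_zero] using h₁,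
      by simpa [Function.update_of_ne hne] using h⟩
  have split1 : G.dist u₁ x + G.dist x u₁' ≤ f u₁ := by
    have h := p₁.take_spec hx1
    have hlen : (p₁.takeUntil x hx1).length + (p₁.dropUntil x hx1).length = p₁.length := by
      rw [← SimpleGraph.Walk.length_append, h]
    have h1 := SimpleGraph.dist_le (p₁.takeUntil x hx1)
    have h2 := SimpleGraph.dist_le (p₁.dropUntil x hx1)
    omega
  have split2 : G.dist u₂ x + G.dist x u₂' ≤ f u₂ := by
    have h := p₂.take_spec hx2
    have hlen : (p₂.takeUntil x hx2).length + (p₂.dropUntil x hx2).length = p₂.length := by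
      rw [← SimpleGraph.Walk.length_append, h]
    have h1 := SimpleGraph.dist_le (p₂.takeUntil x hx2)
    have h2 := SimpleGraph.dist_le (p₂.dropUntil x hx2)
    omega
  have t1 : G.dist u₂ u₁' ≤ G.dist u₂ x + G.dist x u₁' := hconn.dist_triangle
  have t2 : G.dist u₁ u₂' ≤ G.dist u₁ x + G.dist x u₂' := hconn.dist_triangle
  omega

end AJC
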